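/- Let 1 ≤ p < ∞. There exists a constant c > 0, depending only on p, such that for every analytic function f on the open unit disc 𝕌 = {z ∈ ℂ : |z| < 1}, ∫_𝕌 |z·f(z)|ᵖ dA(z) ≥ c·∫_𝕌 |f(z)|ᵖ dA(z), where dA is the two-dimensional Lebesgue (area) measure on ℂ and the integrals are Lebesgue integrals of nonnegative functions with values in [0, ∞]. (Equivalently: the operator of multiplication by the coordinate function z on the Bergman space A^p(𝕌) is bounded below.) -/

import Mathlib

open MeasureTheory

open MeasureTheory Metric Set Complex Real
open scoped ENNReal NNReal

-- circle mean value inequality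
lemma circMVP {f : ℂ → ℂ} (hf : DifferentiableOn ℂ f (ball (0:ℂ) 1))
    {w : ℂ} {r : ℝ} (hr : 0 < r) (hsub : closedBall w r ⊆ ball (0:ℂ) 1) :
    2 * π * ‖f w‖ ≤ ∫ θ in (-π)..π, ‖f (circleMap w r θ)‖ := by
  have hc : ContinuousOn f (closedBall w r) := hf.continuousOn.mono hsub
  have hd : ∀ z ∈ ball w r \ (∅ : Set ℂ), DifferentiableAt ℂ f z := fun z hz =>
    hf.differentiableAt (isOpen_ball.mem_nhds (hsub (ball_subset_closedBall hz.1)))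
  have key := Complex.circleIntegral_sub_center_inv_smul_of_differentiable_on_off_countable hr
    Set.countable_empty hc hd
  rw [circleIntegral] at key
  simp only [deriv_circleMap, circleMap_sub_center, smul_eq_mul] at key
  have hne : ∀ θ : ℝ, circleMap 0 r θ ≠ 0 := fun θ => circleMap_ne_center hr.ne'
  have key2 : (∫ θ in (0:ℝ)..2*π, f (circleMap w r θ)) = 2 * π * f w := by
    have : (∫ θ in (0:ℝ)..2*π, Complex.I * f (circleMap w r θ)) = 2 * π * Complex.I * f w := by
      rw [← key]
      apply intervalIntegral.integral_congr
      intro θ _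
      field_simp [hne θ]
    rw [intervalIntegral.integral_const_mul] at this
    apply mul_left_cancel₀ Complex.I_ne_zero
    rw [this]; ring
  have hper : Function.Periodic (fun θ : ℝ => ‖f (circleMap w r θ)‖) (2*π) :=
    (periodic_circleMap w r).comp fun z => ‖f z‖
  have hshift := hper.intervalIntegral_add_eq (-π) 0
  have h1 : -π + 2*π = π := by ring
  have h2 : (0:ℝ) + 2*π = 2*π := by ring
  rw [h1, h2] at hshift
  rw [hshift]
  calc 2 * π * ‖f w‖ = ‖(2 * π : ℂ) * f w‖ := by
        rw [norm_mul]
        have : ‖(2 * π : ℂ)‖ = 2 * π := by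
          rw [show ((2 * π : ℂ)) = ((2 * π : ℝ) : ℂ) by push_cast; ring,
            Complex.norm_real, Real.norm_eq_abs]
          exact abs_of_pos (by positivity)
        rw [this]
    _ = ‖∫ θ in (0:ℝ)..2*π, f (circleMap w r θ)‖ := by
        rw [key2]
    _ ≤ ∫ θ in (0:ℝ)..2*π, ‖f (circleMap w r θ)‖ :=
        intervalIntegral.norm_integral_le_integral_norm (by positivity)

lemma circJensen {p : ℝ} (hp : 1 ≤ p) {f : ℂ → ℂ} (hf : DifferentiableOn ℂ f (ball (0:ℂ) 1))
    {w : ℂ} {r : ℝ} (hr : 0 < r) (hsub : closedBall w r ⊆ ball (0:ℂ) 1) :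
    2 * π * ‖f w‖ ^ p ≤ ∫ θ in (-π)..π, ‖f (circleMap w r θ)‖ ^ p := by
  have hpi : -π ≤ π := by linarith [Real.pi_pos]
  set g : ℝ → ℝ := fun θ => ‖f (circleMap w r θ)‖ with hgdef
  have hg : Continuous g := by
    apply Continuous.norm
    exact hf.continuousOn.comp_continuous (continuous_circleMap w r)
      (fun θ => hsub (circleMap_mem_closedBall w hr.le θ))
  have hgnn : ∀ θ, 0 ≤ g θ := fun θ => norm_nonneg _
  have hgp : Continuous (fun θ => g θ ^ p) :=
    hg.rpow_const (fun θ => Or.inr (by linarith))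
  have hmvp : 2 * π * ‖f w‖ ≤ ∫ θ in (-π)..π, g θ := circMVP hf hr hsub
  rcases eq_or_lt_of_le hp with hp1 | hp1
  · simp only [← hp1, Real.rpow_one]
    exact hmvp
  -- p > 1 : Hölder
  set μ := volume.restrict (Ioc (-π) π) with hμ
  have hIg : Integrable g μ := hg.integrableOn_Ioc
  have hIgp : Integrable (fun θ => g θ ^ p) μ := hgp.integrableOn_Ioc
  set Rp : ℝ := ∫ θ, g θ ^ p ∂μ with hRp
  have hRpnn : 0 ≤ Rp := integral_nonneg (fun θ => by positivity)
  have hInt1 : (∫ θ in (-π)..π, g θ) = ∫ θ, g θ ∂μ := intervalIntegral.integral_of_le hpi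
  have hInt2 : (∫ θ in (-π)..π, g θ ^ p) = Rp := intervalIntegral.integral_of_le hpi
  rw [hInt2]
  have hpq := Real.HolderConjugate.conjExponent hp1
  set q := Real.conjExponent p with hq
  have hmeas : AEMeasurable (fun θ => ENNReal.ofReal (g θ)) μ :=
    (ENNReal.measurable_ofReal.comp hg.measurable).aemeasurable
  have HH := ENNReal.lintegral_mul_le_Lp_mul_Lq μ hpq hmeas aemeasurable_const (g := fun _ => 1)
  simp only [Pi.mul_apply, Pi.one_apply, mul_one, ENNReal.one_rpow, lintegral_const, one_mul] at HH
  have hμuniv : μ univ = ENNReal.ofReal (2*π) := by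
    rw [hμ, Measure.restrict_apply_univ, Real.volume_Ioc]
    norm_num
    ring_nf
    rw [ENNReal.ofReal_mul Real.pi_pos.le]; simp
  rw [hμuniv] at HH
  have hL1 : ∫⁻ θ, ENNReal.ofReal (g θ) ∂μ = ENNReal.ofReal (∫ θ, g θ ∂μ) :=
    (ofReal_integral_eq_lintegral_ofReal hIg (Filter.Eventually.of_forall hgnn)).symm
  have hLp : ∫⁻ θ, ENNReal.ofReal (g θ) ^ p ∂μ = ENNReal.ofReal Rp := by
    rw [hRp, ofReal_integral_eq_lintegral_ofReal hIgp
      (Filter.Eventually.of_forall (fun θ => by positivity))]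
    congr 1
    ext θ
    rw [ENNReal.ofReal_rpow_of_nonneg (hgnn θ) (by linarith)]
  rw [hL1, hLp] at HH
  -- chain: ofReal (2π ‖f w‖) ≤ ofReal Rp ^ (1/p) * ofReal (2π) ^ (1/q)
  have step1 : ENNReal.ofReal (2 * π * ‖f w‖) ≤
      ENNReal.ofReal Rp ^ (1/p) * ENNReal.ofReal (2*π) ^ (1/q) :=
    le_trans (ENNReal.ofReal_le_ofReal (hmvp.trans_eq hInt1)) HH
  have hp0 : (0:ℝ) < p := by linarith
  have h2pi : ENNReal.ofReal (2*π) ≠ 0 := by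
    simp [ENNReal.ofReal_eq_zero]
    positivity
  have h2pitop : ENNReal.ofReal (2*π) ≠ ⊤ := ENNReal.ofReal_ne_top
  have step2 := ENNReal.rpow_le_rpow step1 hp0.le
  rw [ENNReal.mul_rpow_of_nonneg _ _ hp0.le, ← ENNReal.rpow_mul, ← ENNReal.rpow_mul,
    one_div_mul_cancel hp0.ne', ENNReal.rpow_one] at step2
  have hq1 : 1/q * p = p - 1 := by
    have h := hpq.inv_add_inv_eq_one
    have hqi : q⁻¹ = 1 - p⁻¹ := by linarith
    rw [one_div, hqi, sub_mul, one_mul, inv_mul_cancel₀ hp0.ne']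
  rw [hq1] at step2
  have e1 : ENNReal.ofReal (2*π*‖f w‖) ^ p
      = ENNReal.ofReal (2*π) ^ p * ENNReal.ofReal (‖f w‖^p) := by
    rw [ENNReal.ofReal_mul (by positivity), ENNReal.mul_rpow_of_nonneg _ _ hp0.le,
      ENNReal.ofReal_rpow_of_nonneg (norm_nonneg _) hp0.le]
  have e2 : ENNReal.ofReal (2*π) ^ (p-1) * ENNReal.ofReal (2*π) ^ (1:ℝ)
      = ENNReal.ofReal (2*π) ^ p := by
    rw [← ENNReal.rpow_add _ _ h2pi h2pitop]; norm_num
  have hLHS : ENNReal.ofReal (2 * π * ‖f w‖) ^ p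
      = ENNReal.ofReal (2*π) ^ (p-1) * ENNReal.ofReal (2*π) * ENNReal.ofReal (‖f w‖ ^ p) := by
    rw [e1, ← e2, ENNReal.rpow_one]
  rw [hLHS] at step2
  have hcancel : ENNReal.ofReal (2*π) * ENNReal.ofReal (‖f w‖ ^ p) ≤ ENNReal.ofReal Rp := by
    have hb0 : ENNReal.ofReal (2*π) ^ (p-1) ≠ 0 := by
      simp [ENNReal.rpow_eq_zero_iff, h2pi, h2pitop, not_le.mpr Real.pi_pos, ENNReal.mul_eq_top]
    have hbtop : ENNReal.ofReal (2*π) ^ (p-1) ≠ ⊤ := by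
      simp [ENNReal.rpow_eq_top_iff, h2pi, h2pitop, not_le.mpr Real.pi_pos, ENNReal.mul_eq_top]
    rw [mul_assoc, mul_comm (ENNReal.ofReal Rp) _] at step2
    exact (ENNReal.mul_le_mul_iff_right hb0 hbtop).mp step2
  rw [← ENNReal.ofReal_mul (by positivity)] at hcancel
  exact (ENNReal.ofReal_le_ofReal_iff hRpnn).mp hcancel

lemma core {p : ℝ} (hp : 1 ≤ p) {f : ℂ → ℂ} (hf : DifferentiableOn ℂ f (ball (0:ℂ) 1))
    {w : ℂ} (hw : ‖w‖ < 1/4) :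
    6/25 * π * ‖f w‖ ^ p ≤ ∫ z in ball w (7/10) \ closedBall w (1/2), ‖f z‖ ^ p := by
  set A : Set ℂ := ball w (7/10) \ closedBall w (1/2) with hA
  set A' : Set ℂ := ball (0:ℂ) (7/10) \ closedBall 0 (1/2) with hA'
  have hA'meas : MeasurableSet A' := measurableSet_ball.diff measurableSet_closedBall
  have hAmeas : MeasurableSet A := measurableSet_ball.diff measurableSet_closedBall
  have hmemiff : ∀ z : ℂ, w + z ∈ A ↔ z ∈ A' := by
    intro z
    simp only [hA, hA', mem_diff, mem_ball, mem_closedBall, dist_eq_norm, add_sub_cancel_left,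
      sub_zero]
  set G : ℂ → ℝ := A'.indicator (fun z => ‖f (w + z)‖ ^ p) with hG
  have hT : (∫ z in A, ‖f z‖ ^ p) = ∫ z, G z := by
    rw [← integral_indicator hAmeas, ← integral_add_left_eq_self _ w]
    congr 1
    funext z
    by_cases hz : z ∈ A'
    · simp only [hG, Set.indicator_of_mem ((hmemiff z).mpr hz), Set.indicator_of_mem hz]
    · simp only [hG, Set.indicator_of_notMem (fun h => hz ((hmemiff z).mp h)),
        Set.indicator_of_notMem hz]
  set S : Set (ℝ × ℝ) := Ioo (1/2 : ℝ) (7/10) ×ˢ Ioo (-π) π with hS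
  have hSmeas : MeasurableSet S := measurableSet_Ioo.prod measurableSet_Ioo
  set g2 : ℝ × ℝ → ℝ := fun q => q.1 * ‖f (w + circleMap 0 q.1 q.2)‖ ^ p with hg2
  have hsymm : ∀ q : ℝ × ℝ, Complex.polarCoord.symm q = circleMap 0 q.1 q.2 := by
    intro q
    rw [Complex.polarCoord_symm_apply, circleMap]
    push_cast
    rw [Complex.exp_mul_I]
    ring
  have hP : (∫ z, G z) = ∫ q in S, g2 q := by
    rw [← Complex.integral_comp_polarCoord_symm G]
    have h1 : (∫ q in polarCoord.target, q.1 • G (Complex.polarCoord.symm q))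
        = ∫ q in polarCoord.target, S.indicator g2 q := by
      apply setIntegral_congr_fun polarCoord.open_target.measurableSet
      intro q hq
      rw [polarCoord_target] at hq
      obtain ⟨hq1, hq2⟩ := hq
      have habs : ‖Complex.polarCoord.symm q‖ = q.1 := by
        rw [Complex.norm_polarCoord_symm, abs_of_pos hq1]
      have hmem : Complex.polarCoord.symm q ∈ A' ↔ q.1 ∈ Ioo (1/2:ℝ) (7/10) := by
        simp only [hA', mem_diff, mem_ball, mem_closedBall, dist_zero_right,
          habs, mem_Ioo, not_le]
        tauto
      by_cases hq3 : q.1 ∈ Ioo (1/2:ℝ) (7/10)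
      · have hzS : q ∈ S := ⟨hq3, hq2⟩
        have hzA : circleMap 0 q.1 q.2 ∈ A' := by rw [← hsymm]; exact hmem.mpr hq3
        simp only [hG, hsymm, Set.indicator_of_mem hzA, Set.indicator_of_mem hzS, hg2,
          smul_eq_mul]
      · have hzA : circleMap 0 q.1 q.2 ∉ A' := by
          rw [← hsymm]; exact fun h => hq3 (hmem.mp h)
        have hzS : q ∉ S := fun h => hq3 h.1
        simp only [hG, hsymm, Set.indicator_of_notMem hzA, Set.indicator_of_notMem hzS,
          smul_zero]
    rw [h1, setIntegral_indicator hSmeas]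
    have hsub2 : polarCoord.target ∩ S = S := by
      apply inter_eq_self_of_subset_right
      rw [polarCoord_target, hS]
      exact Set.prod_mono (fun x hx => by simp only [mem_Ioi]; have := hx.1; linarith)
        subset_rfl
    rw [hsub2]
  -- integrability of g2 on S
  have hcmap : Continuous (fun q : ℝ × ℝ => w + circleMap 0 q.1 q.2) := by
    have hc1 : Continuous fun q : ℝ × ℝ => (q.1 : ℂ) * Complex.exp (q.2 * Complex.I) :=
      (Complex.continuous_ofReal.comp continuous_fst).mul
        (((Complex.continuous_ofReal.comp continuous_snd).mul continuous_const).cexp)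
    simpa [circleMap, Pi.add_def] using continuous_const.add hc1
  have hmapsTo : Set.MapsTo (fun q : ℝ × ℝ => w + circleMap 0 q.1 q.2)
      (Icc (1/2:ℝ) (7/10) ×ˢ Icc (-π) π) (ball (0:ℂ) 1) := by
    rintro ⟨r, θ⟩ ⟨⟨hr1, hr2⟩, _⟩
    rw [mem_ball, dist_zero_right]
    calc ‖w + circleMap 0 r θ‖ ≤ ‖w‖ + ‖circleMap 0 r θ‖ := norm_add_le _ _
      _ ≤ 1/4 + 7/10 := by
          apply add_le_add hw.le
          rw [norm_circleMap_zero]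
          exact abs_le.mpr ⟨by linarith, hr2⟩
      _ < 1 := by norm_num
  have hcont : ContinuousOn g2 (Icc (1/2:ℝ) (7/10) ×ˢ Icc (-π) π) := by
    apply ContinuousOn.mul continuous_fst.continuousOn
    exact ((hf.continuousOn.comp hcmap.continuousOn hmapsTo).norm).rpow_const
      (fun q _ => Or.inr (by linarith))
  have hIntS : IntegrableOn g2 S := by
    apply (hcont.integrableOn_compact (isCompact_Icc.prod isCompact_Icc)).mono_set
    exact Set.prod_mono Ioo_subset_Icc_self Ioo_subset_Icc_self
  have hIntS' : Integrable g2 ((volume.restrict (Ioo (1/2:ℝ) (7/10))).prod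
      (volume.restrict (Ioo (-π) π))) := by
    rw [Measure.prod_restrict]
    rw [← Measure.volume_eq_prod ℝ ℝ]
    exact hIntS
  have hFub : (∫ q in S, g2 q) = ∫ r in Ioo (1/2:ℝ) (7/10), ∫ θ in Ioo (-π) π, g2 (r, θ) := by
    rw [hS]
    rw [Measure.volume_eq_prod ℝ ℝ, ← Measure.prod_restrict]
    exact integral_prod _ hIntS'
  -- inner estimate
  have hinner : ∀ r ∈ Ioo (1/2:ℝ) (7/10),
      2 * π * ‖f w‖ ^ p * r ≤ ∫ θ in Ioo (-π) π, g2 (r, θ) := by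
    intro r hr
    have hr0 : 0 < r := by have := hr.1; linarith
    have hsubr : closedBall w r ⊆ ball (0:ℂ) 1 := by
      intro z hz
      rw [mem_closedBall, dist_eq_norm] at hz
      rw [mem_ball, dist_zero_right]
      calc ‖z‖ = ‖z - w + w‖ := by ring_nf
        _ ≤ ‖z - w‖ + ‖w‖ := norm_add_le _ _
        _ < r + 1/4 := by have := hr.2; have := hw; linarith [add_le_add hz hw.le]
        _ < 1 := by have := hr.2; linarith
    have hJ := circJensen hp hf hr0 hsubr
    have heq : (∫ θ in Ioo (-π) π, g2 (r, θ))
        = r * ∫ θ in (-π)..π, ‖f (circleMap w r θ)‖ ^ p := by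
      rw [intervalIntegral.integral_of_le (by linarith [Real.pi_pos]),
        ← MeasureTheory.integral_Ioc_eq_integral_Ioo, ← integral_const_mul]
      congr 1
      funext θ
      simp only [hg2]
      congr 2
      simp [circleMap]
    rw [heq]
    calc 2 * π * ‖f w‖ ^ p * r = r * (2 * π * ‖f w‖ ^ p) := by ring
      _ ≤ r * ∫ θ in (-π)..π, ‖f (circleMap w r θ)‖ ^ p :=
          mul_le_mul_of_nonneg_left hJ hr0.le
  -- outer estimate
  have houter : (∫ r in Ioo (1/2:ℝ) (7/10), 2 * π * ‖f w‖ ^ p * r)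
      ≤ ∫ r in Ioo (1/2:ℝ) (7/10), ∫ θ in Ioo (-π) π, g2 (r, θ) := by
    apply setIntegral_mono_on
    · exact ((continuous_const.mul continuous_id).integrableOn_Icc).mono_set
        Ioo_subset_Icc_self
    · exact MeasureTheory.Integrable.integral_prod_left hIntS'
    · exact measurableSet_Ioo
    · exact hinner
  have hval : (∫ r in Ioo (1/2:ℝ) (7/10), 2 * π * ‖f w‖ ^ p * r)
      = 6/25 * π * ‖f w‖ ^ p := by
    rw [← MeasureTheory.integral_Ioc_eq_integral_Ioo,
      ← intervalIntegral.integral_of_le (by norm_num), intervalIntegral.integral_const_mul,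
      integral_id]
    norm_num
    ring
  rw [hT, hP, hFub, ← hval]
  exact houter

theorem statement_18 (p : ℝ) (hp : 1 ≤ p) :
    ∃ c : ℝ, 0 < c ∧ ∀ f : ℂ → ℂ, DifferentiableOn ℂ f (Metric.ball (0 : ℂ) 1) →
      ENNReal.ofReal c * ∫⁻ z in Metric.ball (0 : ℂ) 1, ENNReal.ofReal (‖f z‖ ^ p) ∂volume ≤
        ∫⁻ z in Metric.ball (0 : ℂ) 1, ENNReal.ofReal (‖z * f z‖ ^ p) ∂volume := by
  have hp0 : (0:ℝ) < p := by linarith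
  refine ⟨(1/4:ℝ) ^ p / 2, by positivity, ?_⟩
  intro f hf
  set F : ℂ → ℝ≥0∞ := fun z => ENNReal.ofReal (‖f z‖ ^ p) with hF
  set inner : Set ℂ := ball (0:ℂ) (1/4) with hinner
  set outer : Set ℂ := ball (0:ℂ) 1 \ ball (0:ℂ) (1/4) with houter
  have houtmeas : MeasurableSet outer := measurableSet_ball.diff measurableSet_ball
  set I := ∫⁻ z in inner, F z with hI
  set O := ∫⁻ z in outer, F z with hO
  set B := ∫⁻ z in ball (0:ℂ) 1, F z with hB
  have hc1 : (0:ℝ) < 6/25 * π := by positivity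
  -- step a : pointwise bound on inner
  have hstepa : ∀ w ∈ inner, ENNReal.ofReal (6/25 * π) * F w ≤ O := by
    intro w hw
    rw [hinner, mem_ball, dist_zero_right] at hw
    have hcore := core hp hf hw
    set Aw : Set ℂ := ball w (7/10) \ closedBall w (1/2) with hAw
    have hAsub : Aw ⊆ closedBall w (7/10) := fun z hz => ball_subset_closedBall hz.1
    have hcb : closedBall w (7/10) ⊆ ball (0:ℂ) 1 := by
      intro z hz
      rw [mem_closedBall, dist_eq_norm] at hz
      rw [mem_ball, dist_zero_right]
      calc ‖z‖ = ‖z - w + w‖ := by ring_nf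
        _ ≤ ‖z - w‖ + ‖w‖ := norm_add_le _ _
        _ < 1 := by linarith
    have hAout : Aw ⊆ outer := by
      rintro z ⟨hz1, hz2⟩
      rw [mem_ball, dist_eq_norm] at hz1
      rw [mem_closedBall, dist_eq_norm, not_le] at hz2
      constructor
      · exact hcb (hAsub ⟨by rwa [mem_ball, dist_eq_norm], by rwa [mem_closedBall, dist_eq_norm,
          not_le]⟩)
      · rw [mem_ball, dist_zero_right, not_lt]
        calc (1/4 : ℝ) ≤ 1/2 - ‖w‖ := by linarith
          _ ≤ ‖z - w‖ - ‖w‖ := by linarith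
          _ ≤ ‖z‖ := by
              have := norm_sub_norm_le (z - w) (-w)
              simp only [sub_neg_eq_add, sub_add_cancel, norm_neg] at this
              linarith
    have hIntAw : IntegrableOn (fun z => ‖f z‖ ^ p) Aw := by
      apply IntegrableOn.mono_set _ hAsub
      apply ContinuousOn.integrableOn_compact (isCompact_closedBall _ _)
      exact ((hf.continuousOn.mono hcb).norm).rpow_const (fun z _ => Or.inr (by linarith))
    have hofReal : ENNReal.ofReal (∫ z in Aw, ‖f z‖ ^ p) = ∫⁻ z in Aw, F z :=
      ofReal_integral_eq_lintegral_ofReal hIntAw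
        (Filter.Eventually.of_forall (fun z => by positivity))
    calc ENNReal.ofReal (6/25 * π) * F w = ENNReal.ofReal (6/25 * π * ‖f w‖ ^ p) := by
          rw [ENNReal.ofReal_mul hc1.le]
      _ ≤ ENNReal.ofReal (∫ z in Aw, ‖f z‖ ^ p) := ENNReal.ofReal_le_ofReal hcore
      _ = ∫⁻ z in Aw, F z := hofReal
      _ ≤ O := lintegral_mono_set hAout
  -- step b : I ≤ O
  have hIO : I ≤ O := by
    have h1 : ENNReal.ofReal (6/25 * π) * I = ∫⁻ w in inner, ENNReal.ofReal (6/25 * π) * F w := by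
      rw [hI, lintegral_const_mul' _ _ ENNReal.ofReal_ne_top]
    have h2 : (∫⁻ w in inner, ENNReal.ofReal (6/25 * π) * F w) ≤ ∫⁻ _ in inner, O :=
      lintegral_mono_ae ((ae_restrict_iff' measurableSet_ball).mpr
        (Filter.Eventually.of_forall hstepa))
    have h3 : (∫⁻ _ in inner, O) = O * volume inner := setLIntegral_const inner O
    have h4 : volume inner ≤ ENNReal.ofReal (6/25 * π) := by
      rw [hinner, Complex.volume_ball]
      have hpi : ((NNReal.pi : ℝ≥0∞)) = ENNReal.ofReal π := by
        rw [← ENNReal.ofReal_coe_nnreal]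
        norm_num
      rw [hpi, ← ENNReal.ofReal_pow (by norm_num), ← ENNReal.ofReal_mul (by positivity)]
      apply ENNReal.ofReal_le_ofReal
      nlinarith [Real.pi_pos]
    have h5 : ENNReal.ofReal (6/25 * π) * I ≤ ENNReal.ofReal (6/25 * π) * O := by
      calc ENNReal.ofReal (6/25 * π) * I ≤ O * volume inner := by rw [h1]; exact h2.trans_eq h3
        _ ≤ O * ENNReal.ofReal (6/25 * π) := mul_le_mul_right h4 O
        _ = ENNReal.ofReal (6/25 * π) * O := mul_comm _ _
    exact (ENNReal.mul_le_mul_iff_right (by simp [ENNReal.ofReal_eq_zero]; positivity)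
      ENNReal.ofReal_ne_top).mp h5
  -- B ≤ 2 O
  have hBO : B ≤ 2 * O := by
    have h1 : B ≤ ∫⁻ z in inner ∪ outer, F z := by
      apply lintegral_mono_set
      intro z hz
      by_cases h : z ∈ inner
      · exact Or.inl h
      · exact Or.inr ⟨hz, h⟩
    calc B ≤ ∫⁻ z in inner ∪ outer, F z := h1
      _ ≤ I + O := lintegral_union_le _ _ _
      _ ≤ O + O := add_le_add_left hIO O
      _ = 2 * O := (two_mul O).symm
  -- RHS lower bound
  have hRHS : ENNReal.ofReal ((1/4:ℝ)^p) * O ≤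
      ∫⁻ z in ball (0:ℂ) 1, ENNReal.ofReal (‖z * f z‖ ^ p) ∂volume := by
    have h1 : ∀ z ∈ outer, ENNReal.ofReal ((1/4:ℝ)^p) * F z
        ≤ ENNReal.ofReal (‖z * f z‖ ^ p) := by
      intro z hz
      have hz4 : (1/4:ℝ) ≤ ‖z‖ := by
        have := hz.2
        rw [mem_ball, dist_zero_right, not_lt] at this
        exact this
      rw [hF, ← ENNReal.ofReal_mul (by positivity)]
      apply ENNReal.ofReal_le_ofReal
      rw [norm_mul, Real.mul_rpow (norm_nonneg _) (norm_nonneg _)]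
      exact mul_le_mul_of_nonneg_right
        (Real.rpow_le_rpow (by norm_num) hz4 hp0.le) (by positivity)
    calc ENNReal.ofReal ((1/4:ℝ)^p) * O = ∫⁻ z in outer, ENNReal.ofReal ((1/4:ℝ)^p) * F z := by
          rw [hO, lintegral_const_mul' _ _ ENNReal.ofReal_ne_top]
      _ ≤ ∫⁻ z in outer, ENNReal.ofReal (‖z * f z‖ ^ p) :=
          lintegral_mono_ae ((ae_restrict_iff' houtmeas).mpr (Filter.Eventually.of_forall h1))
      _ ≤ ∫⁻ z in ball (0:ℂ) 1, ENNReal.ofReal (‖z * f z‖ ^ p) :=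
          lintegral_mono_set diff_subset
  -- conclude
  calc ENNReal.ofReal ((1/4:ℝ)^p / 2) * B ≤ ENNReal.ofReal ((1/4:ℝ)^p / 2) * (2 * O) :=
        mul_le_mul_right hBO _
    _ = ENNReal.ofReal ((1/4:ℝ)^p) * O := by
        rw [← mul_assoc]
        congr 1
        rw [show (2:ℝ≥0∞) = ENNReal.ofReal 2 by norm_num, ← ENNReal.ofReal_mul (by positivity)]
        norm_num
    _ ≤ _ := hRHS
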